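/- arXiv:1008.3572 — 8 statements merged into one kernel-verified Lean document; each statement's English description precedes it below -/
import Mathlib

section
/- For every α ≥ 0, P_0(α) ⊆ U_α and Z_0(α) ⊆ U_α; that is, every point of the closed ball B_r(p) that does not lie in the interior of the power cell P(α) is within distance α of U, and every point of B_r(p) ∩ B_r(q) that does not lie in the interior of Z(α) is within distance α of U. -/
open Metric Set

noncomputable section

/-- The distance function to a finite point set `U`. -/
def distU {k : ℕ} (U : Finset (EuclideanSpace ℝ (Fin k))) (x : EuclideanSpace ℝ (Fin k)) : ℝ :=
  Metric.infDist x (U : Set (EuclideanSpace ℝ (Fin k)))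

/-- The α-offset `U_α` of a finite point set `U`. -/
def offsetU {k : ℕ} (U : Finset (EuclideanSpace ℝ (Fin k))) (α : ℝ) :
    Set (EuclideanSpace ℝ (Fin k)) :=
  {x | distU U x ≤ α}

/-- The power cell of the ball `B_r(p)` at level `α`. -/
def pcell {k : ℕ} (U : Finset (EuclideanSpace ℝ (Fin k))) (p : EuclideanSpace ℝ (Fin k))
    (r α : ℝ) : Set (EuclideanSpace ℝ (Fin k)) :=
  {x | ∀ u ∈ U, dist x p ^ 2 - r ^ 2 ≤ dist x u ^ 2 - α ^ 2}

/-- The strict version of the power cell is open and contained in the power cell. -/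
lemma key {k : ℕ} (U : Finset (EuclideanSpace ℝ (Fin k))) (p : EuclideanSpace ℝ (Fin k))
    (r α : ℝ) (hα : 0 ≤ α) (x : EuclideanSpace ℝ (Fin k))
    (hx : x ∈ closedBall p r) (hxi : x ∉ interior (pcell U p r α)) : distU U x ≤ α := by
  set S : Set (EuclideanSpace ℝ (Fin k)) :=
    {y | ∀ u ∈ U, dist y p ^ 2 - r ^ 2 < dist y u ^ 2 - α ^ 2} with hS
  have hopen : IsOpen S := by
    have : S = ⋂ u ∈ U, {y : EuclideanSpace ℝ (Fin k) |
        dist y p ^ 2 - r ^ 2 < dist y u ^ 2 - α ^ 2} := by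
      ext y; simp [hS]
    rw [this]
    refine isOpen_biInter_finset fun u _ => ?_
    exact isOpen_lt (by fun_prop) (by fun_prop)
  have hsub : S ⊆ pcell U p r α := fun y hy u hu => (hy u hu).le
  have hxS : x ∉ S := fun h => hxi (interior_maximal hsub hopen h)
  simp only [hS, Set.mem_setOf_eq, not_forall] at hxS
  obtain ⟨u, hu, hlt⟩ := hxS
  push_neg at hlt
  have hxp : dist x p ≤ r := mem_closedBall.mp hx
  have h2 : dist x u ≤ α := by nlinarith [dist_nonneg (x := x) (y := u), dist_nonneg (x := x) (y := p)]
  exact le_trans (Metric.infDist_le_dist_of_mem (by simpa using hu)) h2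

/-- for every `α ≥ 0`, `P_0(α) ⊆ U_α` and `Z_0(α) ⊆ U_α`. -/
theorem stmt0 {k : ℕ} (U : Finset (EuclideanSpace ℝ (Fin k))) (hU : U.Nonempty)
    (p q : EuclideanSpace ℝ (Fin k)) (r : ℝ) (hr : 0 < r) :
    ∀ α : ℝ, 0 ≤ α →
      (closedBall p r \ interior (pcell U p r α) ⊆ offsetU U α) ∧
      ((closedBall p r ∩ closedBall q r) \
          interior (pcell U p r α ∩ pcell U q r α) ⊆ offsetU U α) := by
  intro α hα
  constructor
  · intro x ⟨hx, hxi⟩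
    exact key U p r α hα x hx hxi
  · intro x ⟨⟨hxp, hxq⟩, hxi⟩
    rw [interior_inter, Set.mem_inter_iff, not_and_or] at hxi
    rcases hxi with h | h
    · exact key U p r α hα x hxp h
    · exact key U q r α hα x hxq h
end
end

section
/- Convexity Lemma: assume the nondegeneracy condition. Then for every u ∈ U, the sets V(u) ∩ Π_q ∩ B_r(p) ∩ Z_0(α) (the intersection of the lune part of the Voronoi cell with Z_0(α)) and V(u) ∩ Π_p ∩ B_r(p) ∩ Z_0(α) (the intersection of the moon part of the Voronoi cell with Z_0(α)) are convex. -/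
open Metric Set

noncomputable section

/-- `Z_0(α) = (B_r(p) ∩ B_r(q)) \ int (P(α) ∩ Q(α))`. -/
def Z0 {k : ℕ} (U : Finset (EuclideanSpace ℝ (Fin k))) (p q : EuclideanSpace ℝ (Fin k))
    (r α : ℝ) : Set (EuclideanSpace ℝ (Fin k)) :=
  (closedBall p r ∩ closedBall q r) \ interior (pcell U p r α ∩ pcell U q r α)

/-- The Voronoi cell of a point `u` with respect to the point set `U`. -/
def vcell {k : ℕ} (U : Finset (EuclideanSpace ℝ (Fin k))) (u : EuclideanSpace ℝ (Fin k)) :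
    Set (EuclideanSpace ℝ (Fin k)) :=
  {x | ∀ u' ∈ U, dist x u ≤ dist x u'}

/-- The closed half-space of points at least as close to `p` as to `q`. -/
def halfSpace {k : ℕ} (p q : EuclideanSpace ℝ (Fin k)) : Set (EuclideanSpace ℝ (Fin k)) :=
  {x | dist x p ≤ dist x q}

/-- The difference of squared distances is an affine function. -/
lemma faff {k : ℕ} (p u x : EuclideanSpace ℝ (Fin k)) :
    dist x p ^ 2 - dist x u ^ 2 = 2 * (inner ℝ x (u - p) : ℝ) + (‖p‖ ^ 2 - ‖u‖ ^ 2) := by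
  rw [dist_eq_norm, dist_eq_norm, @norm_sub_sq_real, @norm_sub_sq_real, inner_sub_right]
  ring

/-- Superlevel sets of differences of squared distances are convex. -/
lemma convex_ge_aux {k : ℕ} (p u : EuclideanSpace ℝ (Fin k)) (c : ℝ) :
    Convex ℝ {x : EuclideanSpace ℝ (Fin k) | c ≤ dist x p ^ 2 - dist x u ^ 2} := by
  intro x hx y hy a b ha hb hab
  simp only [mem_setOf_eq, faff] at *
  rw [inner_add_left, real_inner_smul_left, real_inner_smul_left]
  calc c = a * c + b * c := by rw [← add_mul, hab, one_mul]
    _ ≤ a * (2 * (inner ℝ x (u - p) : ℝ) + (‖p‖ ^ 2 - ‖u‖ ^ 2)) +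
        b * (2 * (inner ℝ y (u - p) : ℝ) + (‖p‖ ^ 2 - ‖u‖ ^ 2)) :=
      add_le_add (mul_le_mul_of_nonneg_left hx ha) (mul_le_mul_of_nonneg_left hy hb)
    _ = 2 * (a * (inner ℝ x (u - p) : ℝ) + b * (inner ℝ y (u - p) : ℝ)) + (‖p‖ ^ 2 - ‖u‖ ^ 2) := by
      linear_combination (‖p‖ ^ 2 - ‖u‖ ^ 2) * hab

lemma convex_vcell {k : ℕ} (U : Finset (EuclideanSpace ℝ (Fin k)))
    (u : EuclideanSpace ℝ (Fin k)) : Convex ℝ (vcell U u) := by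
  have h : vcell U u = ⋂ u' ∈ U, {x : EuclideanSpace ℝ (Fin k) |
      0 ≤ dist x u' ^ 2 - dist x u ^ 2} := by
    ext x
    simp only [vcell, mem_setOf_eq, mem_iInter, sub_nonneg]
    constructor
    · exact fun h u' hu' => pow_le_pow_left₀ dist_nonneg (h u' hu') 2
    · intro h u' hu'
      have := h u' hu'
      nlinarith [dist_nonneg (x := x) (y := u), dist_nonneg (x := x) (y := u')]
  rw [h]
  exact convex_iInter fun u' => convex_iInter fun _ => convex_ge_aux u' u 0

lemma convex_halfSpace' {k : ℕ} (p q : EuclideanSpace ℝ (Fin k)) :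
    Convex ℝ (halfSpace p q) := by
  have h : halfSpace p q = {x : EuclideanSpace ℝ (Fin k) |
      0 ≤ dist x q ^ 2 - dist x p ^ 2} := by
    ext x
    simp only [halfSpace, mem_setOf_eq, sub_nonneg]
    constructor
    · exact fun h => pow_le_pow_left₀ dist_nonneg h 2
    · intro h
      nlinarith [dist_nonneg (x := x) (y := p), dist_nonneg (x := x) (y := q)]
  rw [h]
  exact convex_ge_aux q p 0

/-- Inside the interior of `P(α) ∩ Q(α)`, the `(p,u)` power constraint is strict. -/
lemma interior_lt {k : ℕ} (U : Finset (EuclideanSpace ℝ (Fin k)))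
    (p q u : EuclideanSpace ℝ (Fin k)) (r α : ℝ) (hr : 0 < r) (hα : 0 ≤ α)
    (hndp : p ∈ U → α < r) (hu : u ∈ U) {x : EuclideanSpace ℝ (Fin k)}
    (hx : x ∈ interior (pcell U p r α ∩ pcell U q r α)) :
    dist x p ^ 2 - dist x u ^ 2 < r ^ 2 - α ^ 2 := by
  have hx' : x ∈ interior (pcell U p r α) := interior_mono inter_subset_left hx
  by_cases hup : u = p
  · subst hup
    have := hndp hu
    simp only [sub_self]
    nlinarith
  · obtain ⟨ε, hε, hball⟩ := Metric.mem_nhds_iff.mp (mem_interior_iff_mem_nhds.mp hx')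
    set v : EuclideanSpace ℝ (Fin k) := u - p with hv
    have hv0 : v ≠ 0 := sub_ne_zero.mpr hup
    have hvn : 0 < ‖v‖ := norm_pos_iff.mpr hv0
    set t : ℝ := ε / (2 * ‖v‖) with ht
    have ht0 : 0 < t := div_pos hε (by positivity)
    have hyball : x + t • v ∈ ball x ε := by
      rw [mem_ball, dist_eq_norm]
      have : x + t • v - x = t • v := by abel
      rw [this, norm_smul, Real.norm_eq_abs, abs_of_pos ht0, ht]
      have heq : ε / (2 * ‖v‖) * ‖v‖ = ε / 2 := by field_simp
      rw [heq]
      linarith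
    have hy := hball hyball u hu
    -- hy : dist (x + t•v) p ^2 - r^2 ≤ dist (x+t•v) u ^2 - α^2
    have h1 : dist (x + t • v) p ^ 2 - dist (x + t • v) u ^ 2
        = dist x p ^ 2 - dist x u ^ 2 + 2 * t * ‖v‖ ^ 2 := by
      rw [faff, faff, inner_add_left, real_inner_smul_left, ← hv,
        real_inner_self_eq_norm_sq]
      ring
    have hp : 0 < t * ‖v‖ ^ 2 := by positivity
    linarith

/-- Key characterization of `Z0` on the lune part of a Voronoi cell. -/
lemma Z0_char {k : ℕ} (U : Finset (EuclideanSpace ℝ (Fin k)))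
    (p q : EuclideanSpace ℝ (Fin k)) (r α : ℝ) (hr : 0 < r) (hα : 0 ≤ α)
    (hndp : p ∈ U → α < r) (hndq : q ∈ U → α < r)
    (u : EuclideanSpace ℝ (Fin k)) (hu : u ∈ U) (x : EuclideanSpace ℝ (Fin k))
    (hvc : x ∈ vcell U u) (hhs : x ∈ halfSpace q p) :
    (x ∈ Z0 U p q r α ↔
      x ∈ closedBall p r ∧ x ∈ closedBall q r ∧
        r ^ 2 - α ^ 2 ≤ dist x p ^ 2 - dist x u ^ 2) := by
  constructor
  · rintro ⟨⟨hbp, hbq⟩, hint⟩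
    refine ⟨hbp, hbq, ?_⟩
    by_contra hcon
    push_neg at hcon
    apply hint
    set O : Set (EuclideanSpace ℝ (Fin k)) := ⋂ u' ∈ U,
      ({y : EuclideanSpace ℝ (Fin k) | dist y p ^ 2 - dist y u' ^ 2 < r ^ 2 - α ^ 2} ∩
       {y : EuclideanSpace ℝ (Fin k) | dist y q ^ 2 - dist y u' ^ 2 < r ^ 2 - α ^ 2}) with hO
    have hOopen : IsOpen O := by
      refine isOpen_biInter_finset fun u' _ => IsOpen.inter ?_ ?_ <;>
      · apply isOpen_lt _ continuous_const
        exact ((continuous_id.dist continuous_const).pow 2).sub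
          ((continuous_id.dist continuous_const).pow 2)
    have hOsub : O ⊆ pcell U p r α ∩ pcell U q r α := by
      intro y hy
      simp only [hO, mem_iInter, mem_inter_iff, mem_setOf_eq] at hy
      constructor
      · intro u' hu'
        have := (hy u' hu').1
        linarith
      · intro u' hu'
        have := (hy u' hu').2
        linarith
    apply interior_maximal hOsub hOopen
    simp only [hO, mem_iInter, mem_inter_iff, mem_setOf_eq]
    intro u' hu'
    have hd : dist x u ≤ dist x u' := hvc u' hu'
    have hd2 : dist x u ^ 2 ≤ dist x u' ^ 2 := pow_le_pow_left₀ dist_nonneg hd 2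
    have hqp : dist x q ≤ dist x p := hhs
    have hqp2 : dist x q ^ 2 ≤ dist x p ^ 2 := pow_le_pow_left₀ dist_nonneg hqp 2
    constructor <;> linarith
  · rintro ⟨hbp, hbq, hge⟩
    refine ⟨⟨hbp, hbq⟩, fun hint => ?_⟩
    exact absurd (interior_lt U p q u r α hr hα hndp hu hint) (not_lt.mpr hge)

lemma Z0_symm {k : ℕ} (U : Finset (EuclideanSpace ℝ (Fin k)))
    (p q : EuclideanSpace ℝ (Fin k)) (r α : ℝ) :
    Z0 U p q r α = Z0 U q p r α := by
  unfold Z0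
  rw [inter_comm (closedBall p r), inter_comm (pcell U p r α)]

/-- Convexity Lemma: under the nondegeneracy condition, the intersections of
the lune part `V(u) ∩ Π_q ∩ B_r(p)` and of the moon part `V(u) ∩ Π_p ∩ B_r(p)` of the
Voronoi cell with `Z_0(α)` are convex. -/
theorem stmt3 {k : ℕ} (U : Finset (EuclideanSpace ℝ (Fin k))) (hU : U.Nonempty)
    (p q : EuclideanSpace ℝ (Fin k)) (r : ℝ) (hr : 0 < r) (α : ℝ) (hα : 0 ≤ α)
    (hndp : p ∈ U → α < r) (hndq : q ∈ U → α < r) :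
    ∀ u ∈ U,
      Convex ℝ (vcell U u ∩ halfSpace q p ∩ closedBall p r ∩ Z0 U p q r α) ∧
      Convex ℝ (vcell U u ∩ halfSpace p q ∩ closedBall p r ∩ Z0 U p q r α) := by
  intro u hu
  constructor
  · have heq : vcell U u ∩ halfSpace q p ∩ closedBall p r ∩ Z0 U p q r α
        = vcell U u ∩ halfSpace q p ∩ closedBall p r ∩ closedBall q r ∩
          {x | r ^ 2 - α ^ 2 ≤ dist x p ^ 2 - dist x u ^ 2} := by
      ext x
      simp only [mem_inter_iff, mem_setOf_eq]
      constructor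
      · rintro ⟨⟨⟨hv, hh⟩, hb⟩, hz⟩
        obtain ⟨hbp, hbq, hge⟩ := (Z0_char U p q r α hr hα hndp hndq u hu x hv hh).mp hz
        exact ⟨⟨⟨⟨hv, hh⟩, hb⟩, hbq⟩, hge⟩
      · rintro ⟨⟨⟨⟨hv, hh⟩, hb⟩, hbq⟩, hge⟩
        exact ⟨⟨⟨hv, hh⟩, hb⟩,
          (Z0_char U p q r α hr hα hndp hndq u hu x hv hh).mpr ⟨hb, hbq, hge⟩⟩
    rw [heq]
    exact ((((convex_vcell U u).inter (convex_halfSpace' q p)).inter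
      (convex_closedBall p r)).inter (convex_closedBall q r)).inter
      (convex_ge_aux p u (r ^ 2 - α ^ 2))
  · have heq : vcell U u ∩ halfSpace p q ∩ closedBall p r ∩ Z0 U p q r α
        = vcell U u ∩ halfSpace p q ∩ closedBall p r ∩ closedBall q r ∩
          {x | r ^ 2 - α ^ 2 ≤ dist x q ^ 2 - dist x u ^ 2} := by
      ext x
      simp only [mem_inter_iff, mem_setOf_eq]
      rw [Z0_symm]
      constructor
      · rintro ⟨⟨⟨hv, hh⟩, hb⟩, hz⟩
        obtain ⟨hbq, hbp, hge⟩ := (Z0_char U q p r α hr hα hndq hndp u hu x hv hh).mp hz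
        exact ⟨⟨⟨⟨hv, hh⟩, hb⟩, hbq⟩, hge⟩
      · rintro ⟨⟨⟨⟨hv, hh⟩, hb⟩, hbq⟩, hge⟩
        exact ⟨⟨⟨hv, hh⟩, hb⟩,
          (Z0_char U q p r α hr hα hndq hndp u hu x hv hh).mpr ⟨hbq, hb, hge⟩⟩
    rw [heq]
    exact ((((convex_vcell U u).inter (convex_halfSpace' p q)).inter
      (convex_closedBall p r)).inter (convex_closedBall q r)).inter
      (convex_ge_aux q u (r ^ 2 - α ^ 2))
end
end

section
/- Containment Lemma: assume the nondegeneracy condition, and let σ ⊆ U be nonempty. If V_σ ∩ P_0(α) ≠ ∅ and V_σ ∩ U_α ∩ B_r(p) ∩ B_r(q) ≠ ∅, then V_σ ∩ Z_0(α) ≠ ∅. (In the nerve terminology of the paper: if a simplex σ lies in L_0(α) and also in K(α), then σ lies in K_0(α).) -/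
open Metric Set

noncomputable section

/-- `P_0(α) = B_r(p) \ int P(α)`. -/
def P0 {k : ℕ} (U : Finset (EuclideanSpace ℝ (Fin k))) (p : EuclideanSpace ℝ (Fin k))
    (r α : ℝ) : Set (EuclideanSpace ℝ (Fin k)) :=
  closedBall p r \ interior (pcell U p r α)

/-- The common Voronoi cell `V_σ = ⋂_{u ∈ σ} V(u)` of a subset `σ ⊆ U`. -/
def vcellInter {k : ℕ} (U σ : Finset (EuclideanSpace ℝ (Fin k))) :
    Set (EuclideanSpace ℝ (Fin k)) :=
  ⋂ u ∈ σ, vcell U u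

lemma aff_dist {k : ℕ} (y x u v : EuclideanSpace ℝ (Fin k)) (a b : ℝ) (hab : a + b = 1) :
    dist (a • y + b • x) u ^ 2 - dist (a • y + b • x) v ^ 2
      = a * (dist y u ^ 2 - dist y v ^ 2) + b * (dist x u ^ 2 - dist x v ^ 2) := by
  simp only [dist_eq_norm, norm_sub_sq_real, inner_add_left, real_inner_smul_left]
  linear_combination (‖v‖^2 - ‖u‖^2) * hab

lemma pcell_closed {k : ℕ} (U : Finset (EuclideanSpace ℝ (Fin k)))
    (p : EuclideanSpace ℝ (Fin k)) (r α : ℝ) : IsClosed (pcell U p r α) := by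
  have : pcell U p r α = ⋂ u ∈ U, {x : EuclideanSpace ℝ (Fin k) |
      dist x p ^ 2 - r ^ 2 ≤ dist x u ^ 2 - α ^ 2} := by
    ext w; simp [pcell]
  rw [this]
  exact isClosed_biInter fun u _ => isClosed_le
    (((continuous_id.dist continuous_const).pow 2).sub continuous_const)
    (((continuous_id.dist continuous_const).pow 2).sub continuous_const)

/-- Containment Lemma: if `V_σ` meets `P_0(α)` and `V_σ` meets
`U_α ∩ B_r(p) ∩ B_r(q)`, then `V_σ` meets `Z_0(α)`. -/
theorem stmt4 {k : ℕ} (U : Finset (EuclideanSpace ℝ (Fin k))) (hU : U.Nonempty)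
    (p q : EuclideanSpace ℝ (Fin k)) (r : ℝ) (hr : 0 < r) (α : ℝ) (hα : 0 ≤ α)
    (hndp : p ∈ U → α < r) (hndq : q ∈ U → α < r)
    (σ : Finset (EuclideanSpace ℝ (Fin k))) (hσU : σ ⊆ U) (hσ : σ.Nonempty)
    (hL0 : (vcellInter U σ ∩ P0 U p r α).Nonempty)
    (hK : (vcellInter U σ ∩ offsetU U α ∩ closedBall p r ∩ closedBall q r).Nonempty) :
    (vcellInter U σ ∩ Z0 U p q r α).Nonempty := by
  obtain ⟨x, hxV, hxB, hxI⟩ := hL0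
  obtain ⟨y, ⟨⟨hyV, hyO⟩, hyBp⟩, hyBq⟩ := hK
  obtain ⟨u0, hu0σ⟩ := hσ
  have hu0U : u0 ∈ U := hσU hu0σ
  have memV : ∀ w : EuclideanSpace ℝ (Fin k),
      w ∈ vcellInter U σ ↔ ∀ u ∈ σ, ∀ u' ∈ U, dist w u ≤ dist w u' := by
    intro w; simp [vcellInter, vcell]
  -- dist y u0 ≤ α
  have hyu0 : dist y u0 ≤ α := by
    obtain ⟨u', hu'U, hu'eq⟩ := (U.finite_toSet.isCompact).exists_infDist_eq_dist
      (by exact_mod_cast hU) y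
    have h1 : dist y u0 ≤ dist y u' := (memV y).mp hyV u0 hu0σ u' hu'U
    have h2 : Metric.infDist y (U : Set (EuclideanSpace ℝ (Fin k))) ≤ α := hyO
    rw [hu'eq] at h2
    linarith
  -- dist x u0 ≤ α
  have hxu0 : dist x u0 ≤ α := by
    have hnot : ¬ (∀ u ∈ U, dist x p ^ 2 - r ^ 2 < dist x u ^ 2 - α ^ 2) := by
      intro hall
      apply hxI
      have hSopen : IsOpen {w : EuclideanSpace ℝ (Fin k) |
          ∀ u ∈ U, dist w p ^ 2 - r ^ 2 < dist w u ^ 2 - α ^ 2} := by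
        have : {w : EuclideanSpace ℝ (Fin k) |
            ∀ u ∈ U, dist w p ^ 2 - r ^ 2 < dist w u ^ 2 - α ^ 2}
            = ⋂ u ∈ U, {w : EuclideanSpace ℝ (Fin k) |
              dist w p ^ 2 - r ^ 2 < dist w u ^ 2 - α ^ 2} := by
          ext w; simp
        rw [this]
        exact isOpen_biInter_finset fun u _ => isOpen_lt
          (((continuous_id.dist continuous_const).pow 2).sub continuous_const)
          (((continuous_id.dist continuous_const).pow 2).sub continuous_const)
      have hsub : {w : EuclideanSpace ℝ (Fin k) |
          ∀ u ∈ U, dist w p ^ 2 - r ^ 2 < dist w u ^ 2 - α ^ 2} ⊆ pcell U p r α :=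
        fun w hw u hu => le_of_lt (hw u hu)
      exact interior_maximal hsub hSopen hall
    push_neg at hnot
    obtain ⟨u1, hu1U, hu1⟩ := hnot
    have hxpB : dist x p ≤ r := mem_closedBall.mp hxB
    have hxu1 : dist x u1 ≤ α := by
      nlinarith [dist_nonneg (x := x) (y := u1), dist_nonneg (x := x) (y := p)]
    exact le_trans ((memV x).mp hxV u0 hu0σ u1 hu1U) hxu1
  -- the segment
  set f : ℝ → EuclideanSpace ℝ (Fin k) := fun t => (1 - t) • y + t • x with hf
  have hfc : Continuous f := by fun_prop
  set A : Set ℝ := Icc (0:ℝ) 1 ∩ f ⁻¹' (interior (pcell U p r α ∩ pcell U q r α))ᶜ with hA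
  have hAclosed : IsClosed A :=
    isClosed_Icc.inter (isOpen_interior.isClosed_compl.preimage hfc)
  have h1A : (1:ℝ) ∈ A := by
    refine ⟨⟨zero_le_one, le_refl 1⟩, ?_⟩
    have hf1 : f 1 = x := by simp [hf]
    simp only [Set.mem_preimage, Set.mem_compl_iff, hf1]
    exact fun hx' => hxI (interior_mono inter_subset_left hx')
  have hAbdd : BddBelow A := ⟨0, fun t ht => ht.1.1⟩
  set t0 := sInf A with ht0
  have ht0A : t0 ∈ A := hAclosed.csInf_mem ⟨1, h1A⟩ hAbdd
  have ht0Icc : t0 ∈ Icc (0:ℝ) 1 := ht0A.1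
  have ha : 0 ≤ 1 - t0 := by linarith [ht0Icc.2]
  have hb : 0 ≤ t0 := ht0Icc.1
  have habz : (1 - t0) + t0 = 1 := by ring
  set z := f t0 with hz
  have hzdef : z = (1 - t0) • y + t0 • x := rfl
  -- z ∈ vcellInter
  have hzV : z ∈ vcellInter U σ := by
    rw [memV]
    intro u huσ u' hu'U
    have hy' : dist y u ≤ dist y u' := (memV y).mp hyV u huσ u' hu'U
    have hx' : dist x u ≤ dist x u' := (memV x).mp hxV u huσ u' hu'U
    have h1 : dist y u ^ 2 ≤ dist y u' ^ 2 :=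
      pow_le_pow_left₀ dist_nonneg hy' 2
    have h2 : dist x u ^ 2 ≤ dist x u' ^ 2 :=
      pow_le_pow_left₀ dist_nonneg hx' 2
    have heq := aff_dist y x u u' (1 - t0) t0 habz
    rw [← hzdef] at heq
    have hsq : dist z u ^ 2 ≤ dist z u' ^ 2 := by nlinarith
    nlinarith [dist_nonneg (x := z) (y := u), dist_nonneg (x := z) (y := u')]
  -- dist z u0 ≤ α
  have hzu0 : dist z u0 ≤ α := by
    have := (convex_closedBall u0 α) (mem_closedBall.mpr hyu0) (mem_closedBall.mpr hxu0)
      ha hb habz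
    simpa [← hzdef, mem_closedBall] using this
  -- z ∈ both balls
  have hzB : z ∈ closedBall p r ∩ closedBall q r := by
    rcases eq_or_lt_of_le hb with h0 | h0
    · have hzy : z = y := by simp [hz, hf, ← h0]
      rw [hzy]; exact ⟨hyBp, hyBq⟩
    · have hzPQ : z ∈ pcell U p r α ∩ pcell U q r α := by
        have hsub : Ico (0:ℝ) t0 ⊆ {t | f t ∈ pcell U p r α ∩ pcell U q r α} := by
          intro t ht
          have htA : t ∉ A := fun hc => absurd (csInf_le hAbdd hc) (not_le.mpr ht.2)
          have htIcc : t ∈ Icc (0:ℝ) 1 := ⟨ht.1, le_trans ht.2.le ht0Icc.2⟩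
          have hint : f t ∈ interior (pcell U p r α ∩ pcell U q r α) := by
            by_contra h; exact htA ⟨htIcc, h⟩
          show f t ∈ pcell U p r α ∩ pcell U q r α
          exact interior_subset hint
        have hcl : IsClosed {t | f t ∈ pcell U p r α ∩ pcell U q r α} :=
          ((pcell_closed U p r α).inter (pcell_closed U q r α)).preimage hfc
        have hIcc : Icc (0:ℝ) t0 ⊆ {t | f t ∈ pcell U p r α ∩ pcell U q r α} := by
          rw [← closure_Ico (ne_of_lt h0)]
          exact closure_minimal hsub hcl
        exact hIcc ⟨h0.le, le_rfl⟩
      constructor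
      · have hc := hzPQ.1 u0 hu0U
        rw [mem_closedBall]
        nlinarith [dist_nonneg (x := z) (y := p), dist_nonneg (x := z) (y := u0)]
      · have hc := hzPQ.2 u0 hu0U
        rw [mem_closedBall]
        nlinarith [dist_nonneg (x := z) (y := q), dist_nonneg (x := z) (y := u0)]
  exact ⟨z, hzV, hzB, ht0A.2⟩
end
end

section
/- Boundary Lemma: assume the nondegeneracy condition. Let σ be a nonempty finite family of sets, each of the form V(u) ∩ Π_p or V(u) ∩ Π_q for some u ∈ U, let τ ⊆ σ be a nonempty subfamily, and write W_σ and W_τ for the intersections of the members of σ and of τ respectively. If W_σ ∩ U_α ∩ B_r(p) ≠ ∅, W_σ ∩ U_α ∩ B_r(p) ∩ B_r(q) = ∅, and W_τ ∩ U_α ∩ B_r(p) ∩ B_r(q) ≠ ∅, then W_τ ∩ Z_0(α) ≠ ∅. (In the nerve terminology of the paper: if σ ∈ L, σ ∉ K, and the face τ of σ lies in K, then τ lies in K_0.) -/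
open Metric Set

noncomputable section

lemma convex_bisector {k : ℕ} (a b : EuclideanSpace ℝ (Fin k)) :
    Convex ℝ {x : EuclideanSpace ℝ (Fin k) | dist x a ≤ dist x b} := by
  have hset : {x : EuclideanSpace ℝ (Fin k) | dist x a ≤ dist x b}
      = {x : EuclideanSpace ℝ (Fin k) |
          (inner ℝ (b - a) x : ℝ) ≤ (‖b‖ ^ 2 - ‖a‖ ^ 2) / 2} := by
    ext x
    simp only [Set.mem_setOf_eq, dist_eq_norm]
    have h1 : ‖x - a‖ ^ 2 = ‖x‖ ^ 2 - 2 * inner ℝ x a + ‖a‖ ^ 2 := by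
      rw [norm_sub_sq_real]
    have h2 : ‖x - b‖ ^ 2 = ‖x‖ ^ 2 - 2 * inner ℝ x b + ‖b‖ ^ 2 := by
      rw [norm_sub_sq_real]
    have h3 : (inner ℝ (b - a) x : ℝ) = inner ℝ x b - inner ℝ x a := by
      rw [inner_sub_left, real_inner_comm b x, real_inner_comm a x]
    constructor
    · intro h
      have hsq : ‖x - a‖ ^ 2 ≤ ‖x - b‖ ^ 2 := by
        nlinarith [norm_nonneg (x - a), norm_nonneg (x - b)]
      nlinarith
    · intro h
      have hsq : ‖x - a‖ ^ 2 ≤ ‖x - b‖ ^ 2 := by nlinarith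
      nlinarith [norm_nonneg (x - a), norm_nonneg (x - b)]
  rw [hset]
  exact convex_halfSpace_le ⟨fun x y => inner_add_right _ _ _,
    fun c x => real_inner_smul_right _ _ _⟩ _

/-- Boundary Lemma: let `σ` be a nonempty finite family of sets, each of the
form `V(u) ∩ Π_p` or `V(u) ∩ Π_q` for some `u ∈ U`, and let `τ ⊆ σ` be nonempty.  If
`W_σ ∩ U_α ∩ B_r(p) ≠ ∅`, `W_σ ∩ U_α ∩ B_r(p) ∩ B_r(q) = ∅`, and
`W_τ ∩ U_α ∩ B_r(p) ∩ B_r(q) ≠ ∅`, then `W_τ ∩ Z_0(α) ≠ ∅`. -/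
theorem stmt5 {k : ℕ} (U : Finset (EuclideanSpace ℝ (Fin k))) (hU : U.Nonempty)
    (p q : EuclideanSpace ℝ (Fin k)) (r : ℝ) (hr : 0 < r) (α : ℝ) (hα : 0 ≤ α)
    (hndp : p ∈ U → α < r) (hndq : q ∈ U → α < r)
    (σ τ : Set (Set (EuclideanSpace ℝ (Fin k)))) (hσfin : σ.Finite) (hσne : σ.Nonempty)
    (hform : ∀ s ∈ σ, ∃ u ∈ U, s = vcell U u ∩ halfSpace p q ∨ s = vcell U u ∩ halfSpace q p)
    (hτσ : τ ⊆ σ) (hτne : τ.Nonempty)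
    (hσL : (⋂₀ σ ∩ offsetU U α ∩ closedBall p r).Nonempty)
    (hσK : ⋂₀ σ ∩ offsetU U α ∩ closedBall p r ∩ closedBall q r = ∅)
    (hτK : (⋂₀ τ ∩ offsetU U α ∩ closedBall p r ∩ closedBall q r).Nonempty) :
    (⋂₀ τ ∩ Z0 U p q r α).Nonempty := by
  -- Extract the witnesses
  obtain ⟨x, ⟨⟨hxτ, hxα⟩, hxp⟩, hxq⟩ := hτK
  obtain ⟨y, ⟨hyσ, hyα⟩, hyp⟩ := hσL
  have hyq : y ∉ closedBall q r := fun h =>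
    (Set.eq_empty_iff_forall_notMem.mp hσK y) ⟨⟨⟨hyσ, hyα⟩, hyp⟩, h⟩
  have hyτ : y ∈ ⋂₀ τ := fun s hs => hyσ s (hτσ hs)
  -- every member of σ is convex
  have hconv : ∀ s ∈ σ, Convex ℝ s := by
    intro s hs
    obtain ⟨u, huU, hcase⟩ := hform s hs
    rcases hcase with h | h <;> rw [h]
    · exact (convex_vcell U u).inter (convex_halfSpace' p q)
    · exact (convex_vcell U u).inter (convex_halfSpace' q p)
  -- find a Voronoi site u controlling W_τ
  obtain ⟨s0, hs0τ⟩ := hτne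
  obtain ⟨u, huU, hs0form⟩ := hform s0 (hτσ hs0τ)
  have hxv : x ∈ vcell U u := by
    rcases hs0form with h | h
    · exact (h ▸ hxτ s0 hs0τ).1
    · exact (h ▸ hxτ s0 hs0τ).1
  have hyv : y ∈ vcell U u := by
    rcases hs0form with h | h
    · exact (h ▸ hyτ s0 hs0τ).1
    · exact (h ▸ hyτ s0 hs0τ).1
  -- consequently dist to u is ≤ α at x and y
  have hdist_le : ∀ w : EuclideanSpace ℝ (Fin k), w ∈ vcell U u → w ∈ offsetU U α →
      dist w u ≤ α := by
    intro w hwv hwα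
    obtain ⟨u'', hu''U, hinf⟩ := (U.finite_toSet.isCompact).exists_infDist_eq_dist
      (Finset.coe_nonempty.mpr hU) w
    calc dist w u ≤ dist w u'' := hwv u'' hu''U
      _ = Metric.infDist w (U : Set (EuclideanSpace ℝ (Fin k))) := hinf.symm
      _ ≤ α := hwα
  have hxu : dist x u ≤ α := hdist_le x hxv hxα
  have hyu : dist y u ≤ α := hdist_le y hyv hyα
  -- the segment from x to y
  set g : ℝ → EuclideanSpace ℝ (Fin k) := fun t => (1 - t) • x + t • y with hg
  have hgc : Continuous g := by
    apply Continuous.add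
    · exact (continuous_const.sub continuous_id).smul continuous_const
    · exact continuous_id.smul continuous_const
  have hg0 : g 0 = x := by simp [hg]
  have hg1 : g 1 = y := by simp [hg]
  have hgmem : ∀ (C : Set (EuclideanSpace ℝ (Fin k))), Convex ℝ C → x ∈ C → y ∈ C →
      ∀ t : ℝ, 0 ≤ t → t ≤ 1 → g t ∈ C := by
    intro C hC hx hy t h0 h1
    exact hC hx hy (by linarith) h0 (by ring)
  have hgτ : ∀ t : ℝ, 0 ≤ t → t ≤ 1 → g t ∈ ⋂₀ τ := by
    intro t h0 h1 s hs
    exact hgmem s (hconv s (hτσ hs)) (hxτ s hs) (hyτ s hs) t h0 h1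
  have hgu : ∀ t : ℝ, 0 ≤ t → t ≤ 1 → dist (g t) u ≤ α := by
    intro t h0 h1
    have h2 : g t - u = (1 - t) • (x - u) + t • (y - u) := by
      simp only [hg]
      module
    calc dist (g t) u = ‖g t - u‖ := dist_eq_norm _ _
      _ = ‖(1 - t) • (x - u) + t • (y - u)‖ := by rw [h2]
      _ ≤ ‖(1 - t) • (x - u)‖ + ‖t • (y - u)‖ := norm_add_le _ _
      _ = (1 - t) * ‖x - u‖ + t * ‖y - u‖ := by
          rw [norm_smul, norm_smul, Real.norm_eq_abs, Real.norm_eq_abs,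
            abs_of_nonneg (by linarith : (0:ℝ) ≤ 1 - t), abs_of_nonneg h0]
      _ = (1 - t) * dist x u + t * dist y u := by rw [dist_eq_norm, dist_eq_norm]
      _ ≤ (1 - t) * α + t * α := by
          nlinarith [dist_nonneg (x := x) (y := u), dist_nonneg (x := y) (y := u)]
      _ = α := by ring
  -- the exit time from B_r(q)
  set S : Set ℝ := Icc (0:ℝ) 1 ∩ g ⁻¹' closedBall q r with hSdef
  have hS0 : (0:ℝ) ∈ S := ⟨⟨le_refl 0, zero_le_one⟩, by simp [Set.mem_preimage, hg0]; exact hxq⟩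
  have hScl : IsClosed S := isClosed_Icc.inter (isClosed_closedBall.preimage hgc)
  have hSbdd : BddAbove S := ⟨1, fun t ht => ht.1.2⟩
  set t₀ : ℝ := sSup S with ht₀def
  have ht₀S : t₀ ∈ S := hScl.csSup_mem ⟨0, hS0⟩ hSbdd
  have ht₀0 : 0 ≤ t₀ := ht₀S.1.1
  have ht₀1 : t₀ ≤ 1 := ht₀S.1.2
  have ht₀lt1 : t₀ < 1 := by
    rcases lt_or_eq_of_le ht₀1 with h | h
    · exact h
    · exact absurd (by rw [← hg1, ← h]; exact ht₀S.2) hyq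
  -- the candidate point
  refine ⟨g t₀, hgτ t₀ ht₀0 ht₀1, ⟨hgmem _ (convex_closedBall p r) hxp hyp t₀ ht₀0 ht₀1,
    ht₀S.2⟩, ?_⟩
  intro hint
  obtain ⟨ε, hε, hball⟩ := Metric.isOpen_iff.mp isOpen_interior (g t₀) hint
  obtain ⟨δ, hδ, hδε⟩ := Metric.continuous_iff.mp hgc t₀ ε hε
  set t : ℝ := t₀ + min (δ / 2) ((1 - t₀) / 2) with htdef
  have hmin_pos : 0 < min (δ / 2) ((1 - t₀) / 2) := lt_min (by linarith) (by linarith)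
  have htgt : t₀ < t := by simp only [htdef]; linarith
  have ht1 : t ≤ 1 := by
    have : min (δ / 2) ((1 - t₀) / 2) ≤ (1 - t₀) / 2 := min_le_right _ _
    simp only [htdef]; linarith
  have ht0 : 0 ≤ t := by linarith
  have htδ : dist t t₀ < δ := by
    rw [Real.dist_eq, abs_of_nonneg (by linarith : (0:ℝ) ≤ t - t₀)]
    have : min (δ / 2) ((1 - t₀) / 2) ≤ δ / 2 := min_le_left _ _
    simp only [htdef]; linarith
  have hgtZ : g t ∈ pcell U p r α ∩ pcell U q r α :=
    interior_subset (hball (Metric.mem_ball.mpr (hδε t htδ)))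
  have hgtu : dist (g t) u ≤ α := hgu t ht0 ht1
  have hq2 : dist (g t) q ^ 2 - r ^ 2 ≤ dist (g t) u ^ 2 - α ^ 2 := hgtZ.2 u huU
  have hq : dist (g t) q ≤ r := by
    nlinarith [dist_nonneg (x := g t) (y := q), dist_nonneg (x := g t) (y := u)]
  have htS : t ∈ S := ⟨⟨ht0, ht1⟩, Metric.mem_closedBall.mpr hq⟩
  have : t ≤ t₀ := le_csSup hSbdd htS
  linarith
end
end

section
/- Nerve Subdivision minimizer property: assume that if p ∈ U then α < r. Let σ ⊆ U be nonempty with V_σ ∩ P_0(α) ≠ ∅. Then the compact set V_σ ∩ U_α ∩ B_r(p) is nonempty, and every point z minimizing the function x ↦ d_U(x)² − ‖x − p‖² over V_σ ∩ U_α ∩ B_r(p) belongs to P_0(α). -/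
open Metric Set
open scoped RealInnerProductSpace

noncomputable section

/-- Expansion of the difference of squared distances along a translation. -/
lemma aux_expand {k : ℕ} (z u p : EuclideanSpace ℝ (Fin k)) (t : ℝ) :
    dist (z + t • (u - p)) u ^ 2 - dist (z + t • (u - p)) p ^ 2
      = dist z u ^ 2 - dist z p ^ 2 - 2 * t * ‖u - p‖ ^ 2 := by
  have h : ∀ q : EuclideanSpace ℝ (Fin k),
      dist (z + t • (u - p)) q ^ 2
        = dist z q ^ 2 + 2 * (t * ⟪z - q, u - p⟫) + t ^ 2 * ‖u - p‖ ^ 2 := by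
    intro q
    rw [dist_eq_norm, dist_eq_norm, add_sub_right_comm, @norm_add_sq_real,
      real_inner_smul_right, norm_smul, Real.norm_eq_abs, mul_pow, sq_abs]
  have hip : ⟪z - u, u - p⟫ - ⟪z - p, u - p⟫ = -(‖u - p‖ ^ 2 : ℝ) := by
    rw [← inner_sub_left]
    have h2 : z - u - (z - p) = -(u - p) := by abel
    rw [h2, inner_neg_left, real_inner_self_eq_norm_sq]
  rw [h u, h p]
  linear_combination (2 * t) * hip

/-- Nerve Subdivision minimizer property: if `V_σ` meets `P_0(α)`, then
`V_σ ∩ U_α ∩ B_r(p)` is a nonempty compact set, and every minimizer of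
`x ↦ d_U(x)² − ‖x − p‖²` over it lies in `P_0(α)`. -/
theorem stmt7 {k : ℕ} (U : Finset (EuclideanSpace ℝ (Fin k))) (hU : U.Nonempty)
    (p : EuclideanSpace ℝ (Fin k)) (r : ℝ) (hr : 0 < r) (α : ℝ) (hα : 0 ≤ α)
    (hndp : p ∈ U → α < r)
    (σ : Finset (EuclideanSpace ℝ (Fin k))) (hσU : σ ⊆ U) (hσ : σ.Nonempty)
    (hL0 : (vcellInter U σ ∩ P0 U p r α).Nonempty) :
    (vcellInter U σ ∩ offsetU U α ∩ closedBall p r).Nonempty ∧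
    IsCompact (vcellInter U σ ∩ offsetU U α ∩ closedBall p r) ∧
    ∀ z ∈ vcellInter U σ ∩ offsetU U α ∩ closedBall p r,
      (∀ x ∈ vcellInter U σ ∩ offsetU U α ∩ closedBall p r,
        distU U z ^ 2 - dist z p ^ 2 ≤ distU U x ^ 2 - dist x p ^ 2) →
      z ∈ P0 U p r α := by
  have hUne : (U : Set (EuclideanSpace ℝ (Fin k))).Nonempty := by
    exact_mod_cast hU
  set g : EuclideanSpace ℝ (Fin k) → ℝ := fun x => distU U x ^ 2 - dist x p ^ 2 with hg
  have hg_cont : Continuous g := by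
    apply Continuous.sub
    · exact (continuous_infDist_pt _).pow 2
    · exact (continuous_id.dist continuous_const).pow 2
  -- characterization of the power cell
  have hpcell_iff : ∀ x, x ∈ pcell U p r α ↔ α ^ 2 - r ^ 2 ≤ g x := by
    intro x
    constructor
    · intro hx
      obtain ⟨u₀, hu₀, hdu₀⟩ := U.finite_toSet.isCompact.exists_infDist_eq_dist hUne x
      have := hx u₀ hu₀
      simp only [hg, distU]
      rw [hdu₀]
      linarith
    · intro hx u hu
      have h1 : distU U x ≤ dist x u := infDist_le_dist_of_mem hu
      have h2 : (0:ℝ) ≤ distU U x := infDist_nonneg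
      have h3 : distU U x ^ 2 ≤ dist x u ^ 2 := by nlinarith
      simp only [hg] at hx
      linarith
  have hopen_sub : {x | α ^ 2 - r ^ 2 < g x} ⊆ interior (pcell U p r α) :=
    interior_maximal (fun x hx => (hpcell_iff x).2 (le_of_lt hx))
      (isOpen_lt continuous_const hg_cont)
  obtain ⟨y, hyV, hyB, hyI⟩ := hL0
  have hgy : g y ≤ α ^ 2 - r ^ 2 := by
    by_contra h
    exact hyI (hopen_sub (lt_of_not_ge h))
  have hyOff : y ∈ offsetU U α := by
    have h1 : dist y p ≤ r := mem_closedBall.mp hyB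
    have h2 : (0:ℝ) ≤ distU U y := infDist_nonneg
    have h3 : distU U y ^ 2 ≤ α ^ 2 := by
      simp only [hg] at hgy
      nlinarith [dist_nonneg (x := y) (y := p)]
    have : distU U y ≤ α := by nlinarith
    exact this
  have hyK : y ∈ vcellInter U σ ∩ offsetU U α ∩ closedBall p r :=
    ⟨⟨hyV, hyOff⟩, hyB⟩
  refine ⟨⟨y, hyK⟩, ?_, ?_⟩
  · -- compactness
    apply IsCompact.inter_left (isCompact_closedBall p r)
    apply IsClosed.inter
    · apply isClosed_biInter
      intro u hu
      have : vcell U u = ⋂ u' ∈ (U : Set (EuclideanSpace ℝ (Fin k))),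
          {x | dist x u ≤ dist x u'} := by
        ext x; simp [vcell]
      rw [this]
      exact isClosed_biInter fun u' _ =>
        isClosed_le (continuous_id.dist continuous_const)
          (continuous_id.dist continuous_const)
    · exact isClosed_le (continuous_infDist_pt _) continuous_const
  · -- minimizer property
    intro z hz hmin
    obtain ⟨u, hu⟩ := hσ
    have hzV : ∀ u' ∈ U, dist z u ≤ dist z u' := by
      have := Set.mem_iInter₂.mp hz.1.1 u hu
      exact this
    have hdz : distU U z = dist z u := by
      refine le_antisymm (infDist_le_dist_of_mem (by exact_mod_cast hσU hu)) ?_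
      by_contra hlt
      obtain ⟨v, hv, hvlt⟩ := (infDist_lt_iff hUne).mp (lt_of_not_ge hlt)
      exact absurd (hzV v hv) (not_le_of_gt hvlt)
    refine ⟨hz.2, ?_⟩
    intro hint
    have hgz_ge : α ^ 2 - r ^ 2 ≤ g z := (hpcell_iff z).1 (interior_subset hint)
    have hgz_le : g z ≤ α ^ 2 - r ^ 2 := le_trans (hmin y hyK) hgy
    have hgz : g z = α ^ 2 - r ^ 2 := le_antisymm hgz_le hgz_ge
    by_cases hup : u = p
    · have hpU : p ∈ U := hσU (hup ▸ hu)
      have hαr : α < r := hndp hpU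
      have : dist z u ^ 2 - dist z p ^ 2 = 0 := by rw [hup]; ring
      simp only [hg, hdz] at hgz
      nlinarith
    · -- u ≠ p : move in the direction u - p to decrease g
      have hnup : (0:ℝ) < ‖u - p‖ := by
        rw [norm_pos_iff]
        exact sub_ne_zero_of_ne hup
      obtain ⟨ε, hε, hball⟩ := Metric.isOpen_iff.mp isOpen_interior z hint
      set t : ℝ := ε / (2 * ‖u - p‖) with ht
      have htpos : 0 < t := div_pos hε (by positivity)
      set w : EuclideanSpace ℝ (Fin k) := z + t • (u - p) with hw
      have hwball : w ∈ ball z ε := by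
        rw [mem_ball, dist_eq_norm]
        have : w - z = t • (u - p) := by rw [hw]; abel
        rw [this, norm_smul, Real.norm_eq_abs, abs_of_pos htpos]
        have heq : t * ‖u - p‖ = ε / 2 := by
          rw [ht]; field_simp
        rw [heq]
        linarith
      have hwpcell : w ∈ pcell U p r α := interior_subset (hball hwball)
      have hgw_ge : α ^ 2 - r ^ 2 ≤ g w := (hpcell_iff w).1 hwpcell
      have hgw_le : g w ≤ dist w u ^ 2 - dist w p ^ 2 := by
        have h1 : distU U w ≤ dist w u := infDist_le_dist_of_mem (by exact_mod_cast hσU hu)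
        have h2 : (0:ℝ) ≤ distU U w := infDist_nonneg
        simp only [hg]
        nlinarith
      have hexp : dist w u ^ 2 - dist w p ^ 2
          = dist z u ^ 2 - dist z p ^ 2 - 2 * t * ‖u - p‖ ^ 2 := aux_expand z u p t
      simp only [hg, hdz] at hgz
      have hpos : 0 < t * ‖u - p‖ ^ 2 := mul_pos htpos (pow_pos hnup 2)
      linarith
end
end

section
/- Intersection Nerve Subdivision minimizer property: assume the nondegeneracy condition. Let σ ⊆ U be nonempty with V_σ ∩ Z_0(α) ≠ ∅. Then the compact set V_σ ∩ U_α ∩ B_r(p) ∩ B_r(q) is nonempty, and every point z minimizing the function x ↦ min{ d_U(x)² − ‖x − p‖², d_U(x)² − ‖x − q‖² } over V_σ ∩ U_α ∩ B_r(p) ∩ B_r(q) belongs to Z_0(α). -/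
open Metric Set

noncomputable section

lemma exists_nearest {k : ℕ} (U : Finset (EuclideanSpace ℝ (Fin k))) (hU : U.Nonempty)
    (x : EuclideanSpace ℝ (Fin k)) : ∃ u ∈ U, distU U x = dist x u := by
  obtain ⟨u, hu, h⟩ := U.finite_toSet.isCompact.exists_infDist_eq_dist
    (Finset.coe_nonempty.mpr hU) x
  exact ⟨u, hu, h⟩

lemma mem_pcell_iff {k : ℕ} (U : Finset (EuclideanSpace ℝ (Fin k))) (hU : U.Nonempty)
    (p : EuclideanSpace ℝ (Fin k)) (r α : ℝ) (x : EuclideanSpace ℝ (Fin k)) :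
    x ∈ pcell U p r α ↔ α ^ 2 - r ^ 2 ≤ distU U x ^ 2 - dist x p ^ 2 := by
  constructor
  · intro h
    obtain ⟨u, hu, he⟩ := exists_nearest U hU x
    have := h u hu
    rw [he]; linarith
  · intro h u hu
    have h1 : distU U x ≤ dist x u := Metric.infDist_le_dist_of_mem (Finset.mem_coe.mpr hu)
    have h2 : distU U x ^ 2 ≤ dist x u ^ 2 :=
      pow_le_pow_left₀ Metric.infDist_nonneg h1 2
    linarith

lemma aux_not_interior {k : ℕ} (U : Finset (EuclideanSpace ℝ (Fin k))) (hU : U.Nonempty)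
    (p : EuclideanSpace ℝ (Fin k)) (r α : ℝ) (hα : 0 ≤ α) (hr : 0 < r)
    (hnd : p ∈ U → α < r) (x : EuclideanSpace ℝ (Fin k))
    (hx : distU U x ^ 2 - dist x p ^ 2 = α ^ 2 - r ^ 2) :
    x ∉ interior (pcell U p r α) := by
  obtain ⟨u, hu, he⟩ := exists_nearest U hU x
  rw [he] at hx
  have hup : u ≠ p := by
    rintro rfl
    have h0 : α ^ 2 = r ^ 2 := by nlinarith
    have : α = r := by nlinarith
    linarith [hnd hu]
  have hnv : 0 < ‖u - p‖ := by
    exact norm_pos_iff.mpr (sub_ne_zero.mpr hup)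
  intro hint
  rw [mem_interior_iff_mem_nhds, Metric.mem_nhds_iff] at hint
  obtain ⟨ε, hε, hball⟩ := hint
  set t : ℝ := ε / (2 * ‖u - p‖) with ht
  have ht0 : 0 < t := by positivity
  set y := x + t • (u - p) with hy
  have hyx : dist y x < ε := by
    have : y - x = t • (u - p) := by rw [hy]; abel
    rw [dist_eq_norm, this, norm_smul, Real.norm_eq_abs, abs_of_pos ht0, ht]
    have heq : ε / (2 * ‖u - p‖) * ‖u - p‖ = ε / 2 := by
      field_simp
    rw [heq]; linarith
  have hyP := hball (mem_ball.mpr hyx) u hu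
  have e1 : y - u = (x - u) + t • (u - p) := by rw [hy]; abel
  have e2 : y - p = (x - p) + t • (u - p) := by rw [hy]; abel
  have i : (inner ℝ (x - u) (u - p) : ℝ) - inner ℝ (x - p) (u - p) = -(‖u - p‖ ^ 2) := by
    rw [← inner_sub_left]
    have h3 : (x - u) - (x - p) = -(u - p) := by abel
    rw [h3, inner_neg_left, real_inner_self_eq_norm_sq]
  have hsub : dist y u ^ 2 - dist y p ^ 2 = dist x u ^ 2 - dist x p ^ 2 - 2 * t * ‖u - p‖ ^ 2 := by
    simp only [dist_eq_norm]
    rw [e1, e2, norm_add_sq_real, norm_add_sq_real, real_inner_smul_right, real_inner_smul_right]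
    linear_combination (2 * t) * i
  have hpos : 0 < t * ‖u - p‖ ^ 2 := mul_pos ht0 (pow_pos hnv 2)
  linarith

/-- Intersection Nerve Subdivision minimizer property: if `V_σ` meets
`Z_0(α)`, then `V_σ ∩ U_α ∩ B_r(p) ∩ B_r(q)` is a nonempty compact set, and every
minimizer of `x ↦ min{d_U(x)² − ‖x − p‖², d_U(x)² − ‖x − q‖²}` over it lies in `Z_0(α)`. -/
theorem stmt8 {k : ℕ} (U : Finset (EuclideanSpace ℝ (Fin k))) (hU : U.Nonempty)
    (p q : EuclideanSpace ℝ (Fin k)) (r : ℝ) (hr : 0 < r) (α : ℝ) (hα : 0 ≤ α)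
    (hndp : p ∈ U → α < r) (hndq : q ∈ U → α < r)
    (σ : Finset (EuclideanSpace ℝ (Fin k))) (hσU : σ ⊆ U) (hσ : σ.Nonempty)
    (hK0 : (vcellInter U σ ∩ Z0 U p q r α).Nonempty) :
    (vcellInter U σ ∩ offsetU U α ∩ closedBall p r ∩ closedBall q r).Nonempty ∧
    IsCompact (vcellInter U σ ∩ offsetU U α ∩ closedBall p r ∩ closedBall q r) ∧
    ∀ z ∈ vcellInter U σ ∩ offsetU U α ∩ closedBall p r ∩ closedBall q r,
      (∀ x ∈ vcellInter U σ ∩ offsetU U α ∩ closedBall p r ∩ closedBall q r,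
        min (distU U z ^ 2 - dist z p ^ 2) (distU U z ^ 2 - dist z q ^ 2) ≤
          min (distU U x ^ 2 - dist x p ^ 2) (distU U x ^ 2 - dist x q ^ 2)) →
      z ∈ Z0 U p q r α := by
    classical
  obtain ⟨w, hwV, hwZ⟩ := hK0
  obtain ⟨⟨hwp, hwq⟩, hwI⟩ := hwZ
  set c : ℝ := α ^ 2 - r ^ 2 with hc
  set f : EuclideanSpace ℝ (Fin k) → ℝ := fun x =>
    min (distU U x ^ 2 - dist x p ^ 2) (distU U x ^ 2 - dist x q ^ 2) with hf
  have hfc : Continuous f := by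
    apply Continuous.min
    · exact ((Metric.continuous_infDist_pt _).pow 2).sub
        ((continuous_id.dist continuous_const).pow 2)
    · exact ((Metric.continuous_infDist_pt _).pow 2).sub
        ((continuous_id.dist continuous_const).pow 2)
  have hsubZ : {y | c < f y} ⊆ pcell U p r α ∩ pcell U q r α := by
    intro y hy
    have h1 : c < distU U y ^ 2 - dist y p ^ 2 := lt_of_lt_of_le hy (min_le_left _ _)
    have h2 : c < distU U y ^ 2 - dist y q ^ 2 := lt_of_lt_of_le hy (min_le_right _ _)
    exact ⟨(mem_pcell_iff U hU p r α y).mpr h1.le, (mem_pcell_iff U hU q r α y).mpr h2.le⟩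
  have hZf : ∀ y ∈ pcell U p r α ∩ pcell U q r α, c ≤ f y := by
    intro y hy
    exact le_min ((mem_pcell_iff U hU p r α y).mp hy.1) ((mem_pcell_iff U hU q r α y).mp hy.2)
  -- f w ≤ c
  have hfw : f w ≤ c := by
    by_contra hlt
    push_neg at hlt
    have hopen : IsOpen {y | c < f y} := isOpen_lt continuous_const hfc
    exact hwI (interior_maximal hsubZ hopen hlt)
  -- w ∈ offsetU
  have hwO : w ∈ offsetU U α := by
    have hdwp : dist w p ≤ r := mem_closedBall.mp hwp
    have hdwq : dist w q ≤ r := mem_closedBall.mp hwq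
    have hsq : distU U w ^ 2 ≤ α ^ 2 := by
      rcases min_le_iff.mp hfw with h | h
      · nlinarith [dist_nonneg (x := w) (y := p)]
      · nlinarith [dist_nonneg (x := w) (y := q)]
    have h0 : (0:ℝ) ≤ distU U w := Metric.infDist_nonneg
    show distU U w ≤ α
    nlinarith
  have hwK : w ∈ vcellInter U σ ∩ offsetU U α ∩ closedBall p r ∩ closedBall q r :=
    ⟨⟨⟨hwV, hwO⟩, hwp⟩, hwq⟩
  refine ⟨⟨w, hwK⟩, ?_, ?_⟩
  · -- compactness
    have hcl : IsClosed (vcellInter U σ ∩ offsetU U α) := by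
      apply IsClosed.inter
      · apply isClosed_biInter
        intro u hu
        have : vcell U u = ⋂ u' ∈ U, {x | dist x u ≤ dist x u'} := by
          ext x; simp [vcell]
        rw [this]
        apply isClosed_biInter
        intro u' hu'
        exact isClosed_le (continuous_id.dist continuous_const)
          (continuous_id.dist continuous_const)
      · exact isClosed_le (Metric.continuous_infDist_pt _) continuous_const
    exact ((isCompact_closedBall p r).inter_left hcl).inter_right (isClosed_closedBall)
  · intro z hz hmin
    have hfz : f z ≤ c := le_trans (hmin w hwK) hfw
    refine ⟨⟨hz.1.2, hz.2⟩, ?_⟩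
    intro hintz
    have hge : c ≤ f z := hZf z (interior_subset hintz)
    have hfz' : f z = c := le_antisymm hfz hge
    rcases min_eq_iff.mp hfz' with ⟨h1, _⟩ | ⟨h1, _⟩
    · exact aux_not_interior U hU p r α hα hr hndp z h1
        ((interior_mono inter_subset_left) hintz)
    · exact aux_not_interior U hU q r α hα hr hndq z h1
        ((interior_mono inter_subset_right) hintz)
end
end

section
/- Local Probabilistic Sampling Theorem (density form): let X ⊆ ℝ^N be a nonempty compact set, let μ be a Borel probability measure on ℝ^N with μ(X) = 1, let ρ > 0, and set v = inf_{x ∈ X} μ(B̄_{ρ/24}(x)), where B̄_s(x) is the closed ball of radius s about x. Assume v > 0 and fix ξ ∈ (0,1). If x_1, …, x_n are independent random points each with law μ and n ≥ (1/v)(log(1/v) + log(1/ξ)), then with probability at least 1 − ξ the sample {x_1, …, x_n} is contained in X and every point of X lies within distance ρ/3 of some x_j; in particular the Hausdorff distance between {x_1, …, x_n} and X is at most ρ/3. -/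
open MeasureTheory ProbabilityTheory Metric
open scoped ENNReal

/-- Existence of a finite `2r`-net of `X` whose cardinality is bounded by `1/v`,
where `v` lower-bounds the measure of `r`-balls around points of `X`. -/
lemma exists_good_net {E : Type*} [MetricSpace E] [MeasurableSpace E] [OpensMeasurableSpace E]
    (μ : Measure E) [IsProbabilityMeasure μ]
    (X : Set E) (r : ℝ) (hr : 0 < r) (v : ℝ) (hvpos : 0 < v)
    (hvle : ∀ c ∈ X, ENNReal.ofReal v ≤ μ (closedBall c r)) :
    ∃ S : Finset E, ↑S ⊆ X ∧ (∀ y ∈ X, ∃ c ∈ S, dist y c ≤ 2 * r) ∧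
      (S.card : ℝ) * v ≤ 1 := by
  set 𝒮 : Set (Set E) := {S | S ⊆ X ∧ S.Pairwise fun a b => 2 * r < dist a b} with h𝒮
  -- finite subsets of separated sets have bounded cardinality
  have key : ∀ (S : Set E), S ∈ 𝒮 → ∀ T : Finset E, ↑T ⊆ S → (T.card : ℝ) * v ≤ 1 := by
    intro S hS T hTS
    have hdisj : (↑T : Set E).PairwiseDisjoint fun c => closedBall c r := by
      intro a ha b hb hab
      have h2 : 2 * r < dist a b := hS.2 (hTS ha) (hTS hb) hab
      exact closedBall_disjoint_closedBall (by linarith)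
    have hmeq : μ (⋃ c ∈ T, closedBall c r) = ∑ c ∈ T, μ (closedBall c r) :=
      measure_biUnion_finset hdisj fun c _ => measurableSet_closedBall
    have hle1 : ∑ c ∈ T, μ (closedBall c r) ≤ 1 := by
      rw [← hmeq]; exact prob_le_one
    have hlow : (T.card : ℝ≥0∞) * ENNReal.ofReal v ≤ ∑ c ∈ T, μ (closedBall c r) := by
      have := Finset.card_nsmul_le_sum T (fun c => μ (closedBall c r)) (ENNReal.ofReal v)
        (fun c hc => hvle c (hS.1 (hTS hc)))
      simpa [nsmul_eq_mul] using this
    have : ENNReal.ofReal ((T.card : ℝ) * v) ≤ 1 := by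
      rw [ENNReal.ofReal_mul (by positivity), ENNReal.ofReal_natCast]
      exact hlow.trans hle1
    have := ENNReal.ofReal_le_one.mp this
    exact this
  -- Zorn: maximal separated subset
  obtain ⟨M, hMmax⟩ := zorn_subset 𝒮 (by
    intro c hc hchain
    refine ⟨⋃₀ c, ⟨?_, ?_⟩, fun s hs => Set.subset_sUnion_of_mem hs⟩
    · exact Set.sUnion_subset fun s hs => (hc hs).1
    · intro a ha b hb hab
      obtain ⟨s, hs, has⟩ := ha
      obtain ⟨t, ht, hbt⟩ := hb
      rcases hchain.total hs ht with h | h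
      · exact (hc ht).2 (h has) hbt hab
      · exact (hc hs).2 has (h hbt) hab)
  have hM𝒮 : M ∈ 𝒮 := hMmax.prop
  -- M is finite
  have hMfin : M.Finite := by
    rw [← Set.not_infinite]
    intro hinf
    obtain ⟨T, hTM, hTfin, hTcard⟩ := hinf.exists_subset_ncard_eq (⌈1 / v⌉₊ + 1)
    have hb := key M hM𝒮 hTfin.toFinset (by simpa using hTM)
    rw [← Set.ncard_eq_toFinset_card _ hTfin, hTcard] at hb
    have hceil : (1 : ℝ) / v ≤ (⌈1 / v⌉₊ : ℝ) := Nat.le_ceil _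
    have : ((⌈1 / v⌉₊ + 1 : ℕ) : ℝ) * v > 1 := by
      push_cast
      have : (1 : ℝ) / v * v ≤ (⌈1 / v⌉₊ : ℝ) * v :=
        mul_le_mul_of_nonneg_right hceil hvpos.le
      rw [div_mul_cancel₀ (1:ℝ) hvpos.ne'] at this
      nlinarith
    linarith
  -- coverage by maximality
  refine ⟨hMfin.toFinset, by simpa using hM𝒮.1, ?_, ?_⟩
  · intro y hy
    by_contra hcon
    push_neg at hcon
    have hy' : ∀ c ∈ M, 2 * r < dist y c := fun c hc => hcon c (by simpa using hc)
    have hins : insert y M ∈ 𝒮 := by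
      constructor
      · exact Set.insert_subset hy hM𝒮.1
      · haveI : Std.Symm (fun a b : E => 2 * r < dist a b) := ⟨fun a b h => by rwa [dist_comm]⟩
        refine Set.pairwise_insert_of_symm |>.mpr
          ⟨hM𝒮.2, fun b hb _ => hy' b hb⟩
    have : insert y M ⊆ M := hMmax.2 hins (Set.subset_insert y M)
    have hyM : y ∈ M := this (Set.mem_insert y M)
    have := hy' y hyM
    simp at this
    linarith
  · have := key M hM𝒮 hMfin.toFinset (by simp)
    exact this

/-- Local Probabilistic Sampling Theorem, density form: let `X ⊆ ℝ^N` be a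
nonempty compact set, `μ` a Borel probability measure with `μ(X) = 1`, `ρ > 0`, and
`v = inf_{x ∈ X} μ(B̄_{ρ/24}(x)) > 0`.  If `x_1, …, x_n` are independent random points
with law `μ` and `n ≥ (1/v)(log(1/v) + log(1/ξ))`, then with probability at least `1 − ξ`
the sample lies in `X`, every point of `X` is within `ρ/3` of a sample point, and the
Hausdorff distance between the sample and `X` is at most `ρ/3`. -/
theorem stmt11 {N : ℕ} {Ω : Type*} [MeasurableSpace Ω]
    (P : Measure Ω) [IsProbabilityMeasure P]
    (X : Set (EuclideanSpace ℝ (Fin N))) (hXne : X.Nonempty) (hXc : IsCompact X)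
    (μ : Measure (EuclideanSpace ℝ (Fin N))) [IsProbabilityMeasure μ] (hμX : μ X = 1)
    (ρ : ℝ) (hρ : 0 < ρ) (v : ℝ)
    (hv : v = sInf ((fun x => (μ (closedBall x (ρ / 24))).toReal) '' X))
    (hvpos : 0 < v)
    (ξ : ℝ) (hξ0 : 0 < ξ) (hξ1 : ξ < 1)
    (n : ℕ) (x : Fin n → Ω → EuclideanSpace ℝ (Fin N)) (hmeas : ∀ j, Measurable (x j))
    (hindep : iIndepFun x P)
    (hlaw : ∀ j, Measure.map (x j) P = μ)
    (hn : (1 / v) * (Real.log (1 / v) + Real.log (1 / ξ)) ≤ (n : ℝ)) :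
    ENNReal.ofReal (1 - ξ) ≤
      P {ω | (∀ j, x j ω ∈ X) ∧ (∀ y ∈ X, ∃ j, dist y (x j ω) ≤ ρ / 3) ∧
             hausdorffDist (Set.range fun j => x j ω) X ≤ ρ / 3} := by
  classical
  have hXm : MeasurableSet X := hXc.isClosed.measurableSet
  -- v lower-bounds ball measures
  have hvle : ∀ c ∈ X, ENNReal.ofReal v ≤ μ (closedBall c (ρ / 24)) := by
    intro c hc
    have h1 : v ≤ (μ (closedBall c (ρ / 24))).toReal := by
      rw [hv]
      exact csInf_le ⟨0, by rintro t ⟨a, -, rfl⟩; exact ENNReal.toReal_nonneg⟩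
        ⟨c, hc, rfl⟩
    calc ENNReal.ofReal v ≤ ENNReal.ofReal (μ (closedBall c (ρ / 24))).toReal :=
          ENNReal.ofReal_le_ofReal h1
      _ = μ (closedBall c (ρ / 24)) := ENNReal.ofReal_toReal (measure_ne_top μ _)
  have hv1 : v ≤ 1 := by
    obtain ⟨c, hc⟩ := hXne
    exact ENNReal.ofReal_le_one.mp ((hvle c hc).trans prob_le_one)
  -- a good net
  obtain ⟨S, hSX, hScov, hScard⟩ :=
    exists_good_net μ X (ρ / 24) (by linarith) v hvpos hvle
  -- n is positive
  have hL1 : 0 ≤ Real.log (1 / v) := Real.log_nonneg (by rw [le_div_iff₀ hvpos]; linarith)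
  have hL2 : 0 < Real.log (1 / ξ) := Real.log_pos (by rw [lt_div_iff₀ hξ0]; linarith)
  have hnpos : 0 < n := by
    have h0 : (0 : ℝ) < (1 / v) * (Real.log (1 / v) + Real.log (1 / ξ)) := by positivity
    exact Nat.cast_pos.mp (lt_of_lt_of_le h0 hn)
  -- real-number estimates
  have hvn : Real.log (1 / v) + Real.log (1 / ξ) ≤ v * n := by
    calc Real.log (1 / v) + Real.log (1 / ξ)
        = v * ((1 / v) * (Real.log (1 / v) + Real.log (1 / ξ))) := by
          rw [← mul_assoc, mul_one_div, div_self hvpos.ne', one_mul]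
      _ ≤ v * n := mul_le_mul_of_nonneg_left hn hvpos.le
  have hexp : (1 - v) ^ n ≤ Real.exp (-(v * n)) := by
    calc (1 - v) ^ n ≤ Real.exp (-v) ^ n :=
          pow_le_pow_left₀ (by linarith) (by linarith [Real.add_one_le_exp (-v)]) n
      _ = Real.exp (-(v * n)) := by rw [← Real.exp_nat_mul]; congr 1; ring
  have hexp2 : Real.exp (-(v * n)) ≤ v * ξ := by
    have hlog : -(v * n) ≤ Real.log (v * ξ) := by
      rw [Real.log_mul hvpos.ne' hξ0.ne']
      rw [one_div, one_div, Real.log_inv, Real.log_inv] at hvn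
      linarith
    calc Real.exp (-(v * n)) ≤ Real.exp (Real.log (v * ξ)) := Real.exp_le_exp.mpr hlog
      _ = v * ξ := Real.exp_log (by positivity)
  have hreal : (S.card : ℝ) * (1 - v) ^ n ≤ ξ := by
    have hcard : (S.card : ℝ) ≤ 1 / v := by rw [le_div_iff₀ hvpos]; exact hScard
    have hpow0 : (0:ℝ) ≤ (1 - v) ^ n := pow_nonneg (by linarith) n
    calc (S.card : ℝ) * (1 - v) ^ n ≤ (1 / v) * Real.exp (-(v * n)) :=
          mul_le_mul hcard hexp hpow0 (by positivity)
      _ ≤ (1 / v) * (v * ξ) := mul_le_mul_of_nonneg_left hexp2 (by positivity)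
      _ = ξ := by field_simp
  -- probability that a fixed ball is missed by all samples
  have hfail : ∀ c ∈ X, P (⋂ j, (x j ⁻¹' closedBall c (ρ / 24))ᶜ) ≤
      ENNReal.ofReal (1 - v) ^ n := by
    intro c hc
    have hprod := hindep.meas_iInter (s := fun j => (x j ⁻¹' closedBall c (ρ / 24))ᶜ)
      (fun j => ⟨(closedBall c (ρ / 24))ᶜ, measurableSet_closedBall.compl,
        by rw [Set.preimage_compl]⟩)
    rw [hprod]
    calc ∏ j, P ((x j ⁻¹' closedBall c (ρ / 24))ᶜ)
        ≤ ∏ _j : Fin n, ENNReal.ofReal (1 - v) := by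
          refine Finset.prod_le_prod' fun j _ => ?_
          have hmap : P ((x j ⁻¹' closedBall c (ρ / 24))ᶜ) = μ ((closedBall c (ρ / 24))ᶜ) := by
            rw [← Set.preimage_compl, ← hlaw j,
              Measure.map_apply (hmeas j) measurableSet_closedBall.compl]
          rw [hmap, measure_compl measurableSet_closedBall (measure_ne_top μ _), measure_univ]
          calc 1 - μ (closedBall c (ρ / 24)) ≤ 1 - ENNReal.ofReal v :=
                tsub_le_tsub_left (hvle c hc) 1
            _ = ENNReal.ofReal (1 - v) := by
                rw [eq_comm, ENNReal.ofReal_sub _ hvpos.le, ENNReal.ofReal_one]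
      _ = ENNReal.ofReal (1 - v) ^ n := by simp
  -- union bound
  have hunion : P (⋃ c ∈ S, ⋂ j, (x j ⁻¹' closedBall c (ρ / 24))ᶜ) ≤ ENNReal.ofReal ξ := by
    calc P (⋃ c ∈ S, ⋂ j, (x j ⁻¹' closedBall c (ρ / 24))ᶜ)
        ≤ ∑ c ∈ S, P (⋂ j, (x j ⁻¹' closedBall c (ρ / 24))ᶜ) := measure_biUnion_finset_le S _
      _ ≤ ∑ _c ∈ S, ENNReal.ofReal (1 - v) ^ n :=
          Finset.sum_le_sum fun c hc => hfail c (hSX hc)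
      _ = (S.card : ℝ≥0∞) * ENNReal.ofReal (1 - v) ^ n := by
          rw [Finset.sum_const, nsmul_eq_mul]
      _ = ENNReal.ofReal ((S.card : ℝ) * (1 - v) ^ n) := by
          rw [ENNReal.ofReal_mul (by positivity), ENNReal.ofReal_pow (by linarith),
            ENNReal.ofReal_natCast]
      _ ≤ ENNReal.ofReal ξ := ENNReal.ofReal_le_ofReal hreal
  -- the samples are a.s. in X
  have hAc : P (⋃ j, (x j ⁻¹' X)ᶜ) = 0 := by
    refine measure_iUnion_null fun j => ?_
    have hXc' : P (x j ⁻¹' Xᶜ) = μ Xᶜ := by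
      rw [← hlaw j, Measure.map_apply (hmeas j) hXm.compl]
    rw [Set.preimage_compl] at hXc'
    rw [hXc', measure_compl hXm (measure_ne_top μ X), hμX, measure_univ, tsub_self]
  -- the good event
  set G : Set Ω := (⋂ j, x j ⁻¹' X) ∩ (⋂ c ∈ S, ⋃ j, x j ⁻¹' closedBall c (ρ / 24)) with hG
  have hGsub : G ⊆ {ω | (∀ j, x j ω ∈ X) ∧ (∀ y ∈ X, ∃ j, dist y (x j ω) ≤ ρ / 3) ∧
      hausdorffDist (Set.range fun j => x j ω) X ≤ ρ / 3} := by
    rintro ω ⟨hω1, hω2⟩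
    simp only [Set.mem_iInter, Set.mem_preimage] at hω1
    simp only [Set.mem_iInter, Set.mem_iUnion, Set.mem_preimage] at hω2
    have hnear : ∀ y ∈ X, ∃ j, dist y (x j ω) ≤ ρ / 3 := by
      intro y hy
      obtain ⟨c, hcS, hyc⟩ := hScov y hy
      obtain ⟨j, hj⟩ := hω2 c hcS
      refine ⟨j, ?_⟩
      have h1 : dist (x j ω) c ≤ ρ / 24 := mem_closedBall.mp hj
      calc dist y (x j ω) ≤ dist y c + dist c (x j ω) := dist_triangle _ _ _
        _ ≤ 2 * (ρ / 24) + ρ / 24 := add_le_add hyc (by rw [dist_comm]; exact h1)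
        _ ≤ ρ / 3 := by linarith
    refine ⟨hω1, hnear, ?_⟩
    refine hausdorffDist_le_of_mem_dist (by linarith) ?_ ?_
    · rintro p ⟨j, rfl⟩
      exact ⟨x j ω, hω1 j, by simp; positivity⟩
    · intro y hy
      obtain ⟨j, hj⟩ := hnear y hy
      exact ⟨x j ω, Set.mem_range_self j, hj⟩
  have hGc : P Gᶜ ≤ ENNReal.ofReal ξ := by
    have hceq : Gᶜ = (⋃ j, (x j ⁻¹' X)ᶜ) ∪
        ⋃ c ∈ S, ⋂ j, (x j ⁻¹' closedBall c (ρ / 24))ᶜ := by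
      rw [hG, Set.compl_inter]
      congr 1
      · rw [Set.compl_iInter]
      · simp [Set.compl_iInter, Set.compl_iUnion]
    calc P Gᶜ ≤ P (⋃ j, (x j ⁻¹' X)ᶜ) +
          P (⋃ c ∈ S, ⋂ j, (x j ⁻¹' closedBall c (ρ / 24))ᶜ) := by
          rw [hceq]; exact measure_union_le _ _
      _ ≤ 0 + ENNReal.ofReal ξ := add_le_add hAc.le hunion
      _ = ENNReal.ofReal ξ := zero_add _
  have h1 : (1 : ℝ≥0∞) ≤ P G + ENNReal.ofReal ξ := by
    calc (1 : ℝ≥0∞) = P Set.univ := measure_univ.symm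
      _ = P (G ∪ Gᶜ) := by rw [Set.union_compl_self]
      _ ≤ P G + P Gᶜ := measure_union_le _ _
      _ ≤ P G + ENNReal.ofReal ξ := add_le_add le_rfl hGc
  calc ENNReal.ofReal (1 - ξ) = 1 - ENNReal.ofReal ξ := by
        rw [ENNReal.ofReal_sub _ hξ0.le, ENNReal.ofReal_one]
    _ ≤ P G := tsub_le_iff_right.mpr h1
    _ ≤ P _ := measure_mono hGsub
end

section
/- Interior characterization of the power cell: assume that if p ∈ U then α < r. Then the interior of the power cell P(α) is exactly the set {x ∈ ℝ^k : ‖x − p‖² − r² < ‖x − u‖² − α² for all u ∈ U with u ≠ p}. -/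
open Metric Set

noncomputable section

open scoped RealInnerProductSpace

lemma aux_half {k : ℕ} (v : EuclideanSpace ℝ (Fin k)) (hv : v ≠ 0) (c : ℝ) :
    interior {x | ⟪v, x⟫ ≤ c} = {x | ⟪v, x⟫ < c} := by
  have hne : (innerSL ℝ v : EuclideanSpace ℝ (Fin k) →L[ℝ] ℝ) ≠ 0 := by
    intro h
    have : ⟪v, v⟫ = 0 := by
      have := congrArg (fun f => f v) h
      simpa using this
    exact hv (inner_self_eq_zero.mp this)
  have hopen : IsOpenMap (innerSL ℝ v : EuclideanSpace ℝ (Fin k) →L[ℝ] ℝ) :=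
    ContinuousLinearMap.isOpenMap_of_ne_zero _ hne
  have := (hopen.preimage_interior_eq_interior_preimage
    (innerSL ℝ v).continuous (Set.Iic c)).symm
  simp only [interior_Iic] at this
  convert this using 2
  all_goals ext y; simp

lemma aux_iff {k : ℕ} (u p x : EuclideanSpace ℝ (Fin k)) (r α : ℝ) :
    (dist x p ^ 2 - r ^ 2 ≤ dist x u ^ 2 - α ^ 2 ↔
      ⟪u - p, x⟫ ≤ (r ^ 2 - α ^ 2 + ‖u‖ ^ 2 - ‖p‖ ^ 2) / 2) ∧
    (dist x p ^ 2 - r ^ 2 < dist x u ^ 2 - α ^ 2 ↔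
      ⟪u - p, x⟫ < (r ^ 2 - α ^ 2 + ‖u‖ ^ 2 - ‖p‖ ^ 2) / 2) := by
  have h1 : dist x u ^ 2 = ‖x‖ ^ 2 - 2 * ⟪x, u⟫ + ‖u‖ ^ 2 := by
    rw [dist_eq_norm, norm_sub_sq_real]
  have h2 : dist x p ^ 2 = ‖x‖ ^ 2 - 2 * ⟪x, p⟫ + ‖p‖ ^ 2 := by
    rw [dist_eq_norm, norm_sub_sq_real]
  have h3 : ⟪u - p, x⟫ = ⟪x, u⟫ - ⟪x, p⟫ := by
    rw [inner_sub_left, real_inner_comm u x, real_inner_comm p x]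
  constructor <;> rw [h1, h2, h3] <;> constructor <;> intro h <;> linarith

/-- Interior characterization of the power cell: assuming `p ∈ U → α < r`,
the interior of `P(α)` is exactly the set of points where all the defining inequalities
with `u ≠ p` are strict. -/
theorem stmt14 {k : ℕ} (U : Finset (EuclideanSpace ℝ (Fin k))) (hU : U.Nonempty)
    (p : EuclideanSpace ℝ (Fin k)) (r : ℝ) (hr : 0 < r) (α : ℝ) (hα : 0 ≤ α)
    (hndp : p ∈ U → α < r) :
    interior (pcell U p r α) =
      {x | ∀ u ∈ U, u ≠ p → dist x p ^ 2 - r ^ 2 < dist x u ^ 2 - α ^ 2} := by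
  have hcell : pcell U p r α =
      ⋂ u ∈ U, {x : EuclideanSpace ℝ (Fin k) | dist x p ^ 2 - r ^ 2 ≤ dist x u ^ 2 - α ^ 2} := by
    ext x; simp [pcell]
  rw [hcell, Finset.interior_iInter]
  ext x
  simp only [mem_iInter, mem_setOf_eq]
  refine forall₂_congr fun u hu => ?_
  by_cases hup : u = p
  · subst hup
    have hαr : α ^ 2 ≤ r ^ 2 := by
      have := hndp hu
      nlinarith
    have : {x : EuclideanSpace ℝ (Fin k) | dist x u ^ 2 - r ^ 2 ≤ dist x u ^ 2 - α ^ 2}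
        = univ := by
      ext y; simp only [mem_setOf_eq, mem_univ, iff_true]; linarith
    rw [this, interior_univ]
    simp
  · have hv : u - p ≠ 0 := sub_ne_zero.mpr hup
    set c := (r ^ 2 - α ^ 2 + ‖u‖ ^ 2 - ‖p‖ ^ 2) / 2 with hc
    have hset : {x : EuclideanSpace ℝ (Fin k) | dist x p ^ 2 - r ^ 2 ≤ dist x u ^ 2 - α ^ 2}
        = {x | ⟪u - p, x⟫ ≤ c} := by
      ext y; exact (aux_iff u p y r α).1
    rw [hset, aux_half _ hv]
    simp only [mem_setOf_eq]
    rw [← (aux_iff u p x r α).2]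
    simp [hup]
end
end
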